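/- Let H(q,t,a) be the hook super-polynomial of the trefoil and write t·H(q,t,a) = Σ_{i,j,m} c(i,j,m) a^i q^j t^m with c(i,j,m) ∈ ℤ and m ranging over nonnegative integers. Then for every i, j and every N ≥ 0, the partial sum Σ_{m=0}^{N} c(i,j,m) is nonnegative. -/
import Mathlib


open MvPolynomial

set_option maxHeartbeats 2000000

/-- Monomial `a^i q^j t^m` in `ℤ[a,q,t]` with `a = X 0`, `q = X 1`, `t = X 2`. -/
noncomputable def mon (i j m : ℕ) : MvPolynomial (Fin 3) ℤ :=
  X 0 ^ i * X 1 ^ j * X 2 ^ m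

/-- `t · H(q,t,a)` for the hook super-polynomial `H = HD_{3,2}(ω₁+ω₂; q,t,a)`
of the trefoil; it is a genuine polynomial in `a = X 0`, `q = X 1`, `t = X 2`. -/
noncomputable def tH : MvPolynomial (Fin 3) ℤ :=
  mon 0 0 1 + mon 3 6 0 + 2 * mon 0 1 2 - mon 0 1 3 + 2 * mon 0 2 3 +
    mon 0 3 3 - mon 0 2 4 + 2 * mon 0 3 4 - mon 0 3 5 + 2 * mon 0 4 5 +
    mon 0 5 6 +
    (2 * mon 1 2 1 + mon 1 3 1 + mon 1 1 0 - mon 1 2 2 + 3 * mon 1 3 2 +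
      mon 1 4 2 - mon 1 3 3 + 3 * mon 1 4 3 + mon 1 5 3 - mon 1 4 4 +
      2 * mon 1 5 4 + mon 1 6 5) +
    (mon 2 4 1 + mon 2 5 1 + mon 2 3 0 + mon 2 4 0 - mon 2 4 2 +
      mon 2 5 2 + mon 2 6 2 + mon 2 6 3)

/-- The coefficient `c(i,j,m)` of `a^i q^j t^m` in `t·H`. -/
noncomputable def cHook (i j m : ℕ) : ℤ :=
  MvPolynomial.coeff
    (Finsupp.single 0 i + Finsupp.single 1 j + Finsupp.single 2 m) tH


lemma mon_eq (i j m : ℕ) : mon i j m = monomial (Finsupp.single 0 i + Finsupp.single 1 j + Finsupp.single 2 m) (1:ℤ) := by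
  simp [mon, X_pow_eq_monomial, monomial_mul]

lemma coeff_mon (i j m i' j' m' : ℕ) :
    MvPolynomial.coeff (Finsupp.single 0 i + Finsupp.single 1 j + Finsupp.single 2 m) (mon i' j' m')
    = if i = i' ∧ j = j' ∧ m = m' then 1 else 0 := by
  rw [mon_eq, coeff_monomial]
  have h : (Finsupp.single (0:Fin 3) i' + Finsupp.single 1 j' + Finsupp.single 2 m'
      = Finsupp.single 0 i + Finsupp.single 1 j + Finsupp.single 2 m) ↔ (i = i' ∧ j = j' ∧ m = m') := by
    constructor
    · intro h
      refine ⟨?_, ?_, ?_⟩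
      · have := DFunLike.congr_fun h 0; simpa using this.symm
      · have := DFunLike.congr_fun h 1; simpa using this.symm
      · have := DFunLike.congr_fun h 2; simpa using this.symm
    · rintro ⟨rfl, rfl, rfl⟩; rfl
  simp [h]
lemma cHook_eq (i j m : ℕ) : cHook i j m =
      (if i = 0 ∧ j = 0 ∧ m = 1 then (1:ℤ) else 0)
      + (if i = 3 ∧ j = 6 ∧ m = 0 then (1:ℤ) else 0)
      + (if i = 0 ∧ j = 1 ∧ m = 2 then (1:ℤ) else 0) + (if i = 0 ∧ j = 1 ∧ m = 2 then (1:ℤ) else 0)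
      - (if i = 0 ∧ j = 1 ∧ m = 3 then (1:ℤ) else 0)
      + (if i = 0 ∧ j = 2 ∧ m = 3 then (1:ℤ) else 0) + (if i = 0 ∧ j = 2 ∧ m = 3 then (1:ℤ) else 0)
      + (if i = 0 ∧ j = 3 ∧ m = 3 then (1:ℤ) else 0)
      - (if i = 0 ∧ j = 2 ∧ m = 4 then (1:ℤ) else 0)
      + (if i = 0 ∧ j = 3 ∧ m = 4 then (1:ℤ) else 0) + (if i = 0 ∧ j = 3 ∧ m = 4 then (1:ℤ) else 0)
      - (if i = 0 ∧ j = 3 ∧ m = 5 then (1:ℤ) else 0)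
      + (if i = 0 ∧ j = 4 ∧ m = 5 then (1:ℤ) else 0) + (if i = 0 ∧ j = 4 ∧ m = 5 then (1:ℤ) else 0)
      + (if i = 0 ∧ j = 5 ∧ m = 6 then (1:ℤ) else 0)
      + (if i = 1 ∧ j = 2 ∧ m = 1 then (1:ℤ) else 0) + (if i = 1 ∧ j = 2 ∧ m = 1 then (1:ℤ) else 0)
      + (if i = 1 ∧ j = 3 ∧ m = 1 then (1:ℤ) else 0)
      + (if i = 1 ∧ j = 1 ∧ m = 0 then (1:ℤ) else 0)
      - (if i = 1 ∧ j = 2 ∧ m = 2 then (1:ℤ) else 0)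
      + (if i = 1 ∧ j = 3 ∧ m = 2 then (1:ℤ) else 0) + (if i = 1 ∧ j = 3 ∧ m = 2 then (1:ℤ) else 0) + (if i = 1 ∧ j = 3 ∧ m = 2 then (1:ℤ) else 0)
      + (if i = 1 ∧ j = 4 ∧ m = 2 then (1:ℤ) else 0)
      - (if i = 1 ∧ j = 3 ∧ m = 3 then (1:ℤ) else 0)
      + (if i = 1 ∧ j = 4 ∧ m = 3 then (1:ℤ) else 0) + (if i = 1 ∧ j = 4 ∧ m = 3 then (1:ℤ) else 0) + (if i = 1 ∧ j = 4 ∧ m = 3 then (1:ℤ) else 0)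
      + (if i = 1 ∧ j = 5 ∧ m = 3 then (1:ℤ) else 0)
      - (if i = 1 ∧ j = 4 ∧ m = 4 then (1:ℤ) else 0)
      + (if i = 1 ∧ j = 5 ∧ m = 4 then (1:ℤ) else 0) + (if i = 1 ∧ j = 5 ∧ m = 4 then (1:ℤ) else 0)
      + (if i = 1 ∧ j = 6 ∧ m = 5 then (1:ℤ) else 0)
      + (if i = 2 ∧ j = 4 ∧ m = 1 then (1:ℤ) else 0)
      + (if i = 2 ∧ j = 5 ∧ m = 1 then (1:ℤ) else 0)
      + (if i = 2 ∧ j = 3 ∧ m = 0 then (1:ℤ) else 0)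
      + (if i = 2 ∧ j = 4 ∧ m = 0 then (1:ℤ) else 0)
      - (if i = 2 ∧ j = 4 ∧ m = 2 then (1:ℤ) else 0)
      + (if i = 2 ∧ j = 5 ∧ m = 2 then (1:ℤ) else 0)
      + (if i = 2 ∧ j = 6 ∧ m = 2 then (1:ℤ) else 0)
      + (if i = 2 ∧ j = 6 ∧ m = 3 then (1:ℤ) else 0) := by
  have h3 : ∀ x : MvPolynomial (Fin 3) ℤ, 3 * x = x + x + x := fun x => by ring
  rw [cHook, tH]
  simp only [two_mul, h3, coeff_add, coeff_sub, coeff_mon]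
  ring

lemma sum_ite_cond (a b c i j N : ℕ) :
    ∑ m ∈ Finset.range (N+1), (if i = a ∧ j = b ∧ m = c then (1:ℤ) else 0)
    = if i = a ∧ j = b ∧ c ≤ N then 1 else 0 := by
  rcases eq_or_ne i a with rfl|h
  · rcases eq_or_ne j b with rfl|h
    · simp [Finset.sum_ite_eq', Finset.mem_range, Nat.lt_succ_iff]
    · simp [h]
  · simp [h]

theorem stmt_18 (i j N : ℕ) :
    0 ≤ ∑ m ∈ Finset.range (N + 1), cHook i j m := by
  rcases i with _|_|_|_|i <;> rcases j with _|_|_|_|_|_|_|j <;>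
    simp only [cHook_eq, Finset.sum_add_distrib, Finset.sum_sub_distrib, sum_ite_cond] <;>
    simp <;> (try split_ifs) <;> omega
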